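/- If G ≀ H does not have a surjective strategy and φ : G' → G is a surjective group homomorphism, then G' ≀ H does not have a surjective strategy. -/

import Mathlib

/-- One step of multiplication in the wreath product `G ≀ H` (base `Ω → G`,
with `H` acting on `Ω`): `(k,h)·(k',h') = (k·(h·k'), hh')`. -/
def wmul {G H Ω : Type*} [Group G] [Group H] [MulAction H Ω]
    (a b : (Ω → G) × H) : (Ω → G) × H :=
  (a.1 * fun ω => b.1 (a.2⁻¹ • ω), a.2 * b.2)

/-- `ks` is a surjective strategy for `G ≀ H`: for every adversarial sequence
`hs` of the same length, the projections to the base `K = Ω → G` of the partial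
products `id, (k₁,h₁), (k₁,h₁)(k₂,h₂), …` cover all of `K`. -/
def IsSurjStrat (G : Type*) [Group G] (H : Type*) [Group H] (Ω : Type*) [MulAction H Ω]
    (ks : List (Ω → G)) : Prop :=
  ∀ hs : List H, hs.length = ks.length →
    ∀ k : Ω → G, k ∈ (((ks.zip hs).scanl wmul 1).map Prod.fst)

/-- The puzzle `G ≀ H` (switches `G` at positions `Ω`, spun by `H`) has a
surjective strategy. -/
def HasSurjStrat (G : Type*) [Group G] (H : Type*) [Group H] (Ω : Type*) [MulAction H Ω] : Prop :=
  ∃ ks : List (Ω → G), IsSurjStrat G H Ω ks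

section aux

variable {G G' H Ω : Type*} [Group G] [Group G'] [Group H] [MulAction H Ω]

lemma wmul_map (φ : G' →* G) (a b : (Ω → G') × H) :
    Prod.map (fun k => φ ∘ k) id (wmul a b) =
      wmul (Prod.map (fun k => φ ∘ k) id a) (Prod.map (fun k => φ ∘ k) id b) := by
  unfold wmul
  simp only [Prod.map]
  refine Prod.ext ?_ rfl
  funext ω
  simp [Function.comp, map_mul]

lemma scanl_map (φ : G' →* G) (l : List ((Ω → G') × H)) (a : (Ω → G') × H) :
    (l.scanl wmul a).map (Prod.map (fun k => φ ∘ k) id) =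
      (l.map (Prod.map (fun k => φ ∘ k) id)).scanl wmul
        (Prod.map (fun k => φ ∘ k) id a) := by
  induction l generalizing a with
  | nil => simp
  | cons b l ih => simp [List.scanl_cons, ih, wmul_map φ a b]

end aux

/-- reduction on switches via a surjective homomorphism φ : G' → G. -/
theorem stmt1 {G G' H Ω : Type*} [Group G] [Group G'] [Group H] [MulAction H Ω]
    [Fintype Ω] [Finite G] [Finite G'] [Finite H] [FaithfulSMul H Ω]
    (φ : G' →* G) (hφ : Function.Surjective φ)
    (h : ¬ HasSurjStrat G H Ω) : ¬ HasSurjStrat G' H Ω := by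
  intro ⟨ks', hks'⟩
  apply h
  refine ⟨ks'.map (fun k => φ ∘ k), ?_⟩
  intro hs hlen k
  obtain ⟨k', hk'⟩ : ∃ k' : Ω → G', φ ∘ k' = k := by
    choose f hf using fun ω => hφ (k ω)
    exact ⟨f, funext hf⟩
  simp only [List.length_map] at hlen
  have hmem := hks' hs hlen k'
  have hzip : (ks'.map (fun k => φ ∘ k)).zip hs =
      (ks'.zip hs).map (Prod.map (fun k => φ ∘ k) id) := by
    rw [List.zip_map_left]
  have h1 : Prod.map (fun k : Ω → G' => φ ∘ k) (id : H → H) 1 = 1 := by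
    refine Prod.ext ?_ rfl
    funext ω
    exact map_one φ
  rw [hzip, ← h1, ← scanl_map φ, List.map_map]
  have : Prod.fst ∘ Prod.map (fun k : Ω → G' => φ ∘ k) (id : H → H) =
      (fun k => φ ∘ k) ∘ Prod.fst := by
    funext a; rfl
  rw [this, ← List.map_map]
  rw [← hk']
  exact List.mem_map_of_mem hmem
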